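/- (FCIQMC spawning error bound) Let a ∈ R^N be a vector with K = ‖a‖_0 ≥ 1 nonzero entries. Pick index j uniformly among the K nonzero entries, and let n be an integer random variable with n = ⌊K|a(j)|⌋ or ⌊K|a(j)|⌋+1 such that E[n | j] = K|a(j)|. Set X = n·sgn(a(j))·e_j. Then E[X] = a and E[‖X − a‖_2²] ≤ (K − 1)‖a‖_2² + 1/4. -/

import Mathlib

open MeasureTheory Finset

lemma fciqmc_split_integral {Ω : Type*} {mΩ : MeasurableSpace Ω} (μ : Measure Ω)
    [IsFiniteMeasure μ] {ι : Type*} (S : Finset ι) (A B : ι → Set Ω)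
    (hA : ∀ j, MeasurableSet (A j)) (hB : ∀ j, MeasurableSet (B j))
    (hdAB : ∀ j, Disjoint (A j) (B j))
    (hpair : (S : Set ι).PairwiseDisjoint (fun j => A j ∪ B j))
    (hcompl : μ (⋃ j ∈ S, A j ∪ B j)ᶜ = 0)
    {E : Type*} [NormedAddCommGroup E] [NormedSpace ℝ E] [CompleteSpace E]
    (g : Ω → E) (vA vB : ι → E)
    (hgA : ∀ j ∈ S, ∀ ω ∈ A j, g ω = vA j)
    (hgB : ∀ j ∈ S, ∀ ω ∈ B j, g ω = vB j) :
    ∫ ω, g ω ∂μ = ∑ j ∈ S, ((μ (A j)).toReal • vA j + (μ (B j)).toReal • vB j) := by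
  have hgAae : ∀ j ∈ S, g =ᵐ[μ.restrict (A j)] fun _ => vA j := fun j hj =>
    (ae_restrict_mem (hA j)).mono (fun ω hω => hgA j hj ω hω)
  have hgBae : ∀ j ∈ S, g =ᵐ[μ.restrict (B j)] fun _ => vB j := fun j hj =>
    (ae_restrict_mem (hB j)).mono (fun ω hω => hgB j hj ω hω)
  have hintA : ∀ j ∈ S, IntegrableOn g (A j) μ := fun j hj =>
    (integrableOn_const (measure_ne_top μ _)).congr ((hgAae j hj).symm)
  have hintB : ∀ j ∈ S, IntegrableOn g (B j) μ := fun j hj =>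
    (integrableOn_const (measure_ne_top μ _)).congr ((hgBae j hj).symm)
  have hres : μ.restrict (⋃ j ∈ S, A j ∪ B j) = μ := by
    apply Measure.restrict_eq_self_of_ae_mem
    rw [ae_iff]
    exact hcompl
  calc ∫ ω, g ω ∂μ = ∫ ω in (⋃ j ∈ S, A j ∪ B j), g ω ∂μ := by rw [hres]
    _ = ∑ j ∈ S, ∫ ω in A j ∪ B j, g ω ∂μ := by
        apply integral_biUnion_finset S (fun j _ => (hA j).union (hB j)) hpair
          (fun j hj => (hintA j hj).union (hintB j hj))
    _ = ∑ j ∈ S, ((μ (A j)).toReal • vA j + (μ (B j)).toReal • vB j) := by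
        refine Finset.sum_congr rfl (fun j hj => ?_)
        rw [setIntegral_union (hdAB j) (hB j) (hintA j hj) (hintB j hj),
          integral_congr_ae (hgAae j hj), integral_congr_ae (hgBae j hj),
          setIntegral_const, setIntegral_const]
        rfl

/-- FCIQMC spawning error bound: pick a location `J` uniformly among the
`K = ‖a‖₀` nonzero entries of `a`, spawn `n` children by stochastic rounding of
`K|a(J)|`, and set `X = n · sgn(a(J)) · e_J`. Then `E[X] = a` and
`E[‖X − a‖₂²] ≤ (K − 1)‖a‖₂² + 1/4`. -/
theorem fciqmc_spawning_bound {Ω : Type*} {mΩ : MeasurableSpace Ω}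
    (μ : Measure Ω) [IsProbabilityMeasure μ] {N : ℕ}
    (a : Fin N → ℝ) (S : Finset (Fin N))
    (hS : S = Finset.univ.filter (fun j => a j ≠ 0))
    (hK : 1 ≤ S.card)
    (J : Ω → Fin N) (n : Ω → ℕ) (X : Ω → Fin N → ℝ)
    (hJmeas : Measurable J) (hnmeas : Measurable n)
    (hJS : ∀ᵐ ω ∂μ, J ω ∈ S)
    (hlaw1 : ∀ j ∈ S,
      μ {ω | J ω = j ∧ (n ω : ℤ) = ⌊(S.card : ℝ) * |a j|⌋} =
        ENNReal.ofReal ((1 - Int.fract ((S.card : ℝ) * |a j|)) / S.card))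
    (hlaw2 : ∀ j ∈ S,
      μ {ω | J ω = j ∧ (n ω : ℤ) = ⌊(S.card : ℝ) * |a j|⌋ + 1} =
        ENNReal.ofReal (Int.fract ((S.card : ℝ) * |a j|) / S.card))
    (hX : ∀ ω, X ω = fun i =>
      if i = J ω then (n ω : ℝ) * Real.sign (a (J ω)) else 0) :
    (∫ ω, X ω ∂μ) = a ∧
      ∫ ω, ∑ i, (X ω i - a i) ^ 2 ∂μ ≤
        ((S.card : ℝ) - 1) * (∑ i, (a i) ^ 2) + 1 / 4 := by
  classical
  have hK0 : (0:ℝ) < (S.card : ℝ) := by exact_mod_cast Nat.lt_of_lt_of_le Nat.zero_lt_one hK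
  have hKne : (S.card : ℝ) ≠ 0 := ne_of_gt hK0
  set A : Fin N → Set Ω :=
    fun j => {ω | J ω = j ∧ (n ω : ℤ) = ⌊(S.card : ℝ) * |a j|⌋} with hAdef
  set B : Fin N → Set Ω :=
    fun j => {ω | J ω = j ∧ (n ω : ℤ) = ⌊(S.card : ℝ) * |a j|⌋ + 1} with hBdef
  have hAmeas : ∀ j, MeasurableSet (A j) := by
    intro j
    have h : A j = J ⁻¹' {j} ∩ n ⁻¹' {k : ℕ | (k : ℤ) = ⌊(S.card : ℝ) * |a j|⌋} := rfl
    rw [h]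
    exact (hJmeas (measurableSet_singleton j)).inter
      (hnmeas ((Set.to_countable _).measurableSet))
  have hBmeas : ∀ j, MeasurableSet (B j) := by
    intro j
    have h : B j = J ⁻¹' {j} ∩ n ⁻¹' {k : ℕ | (k : ℤ) = ⌊(S.card : ℝ) * |a j|⌋ + 1} := rfl
    rw [h]
    exact (hJmeas (measurableSet_singleton j)).inter
      (hnmeas ((Set.to_countable _).measurableSet))
  have hdAB : ∀ j, Disjoint (A j) (B j) := by
    intro j
    rw [Set.disjoint_left]
    rintro ω ⟨h1, h2⟩ ⟨h3, h4⟩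
    omega
  have hpair : ((S : Set (Fin N))).PairwiseDisjoint (fun j => A j ∪ B j) := by
    intro j _ j' _ hne
    rw [Function.onFun, Set.disjoint_left]
    rintro ω (⟨h1, _⟩ | ⟨h1, _⟩) (⟨h2, _⟩ | ⟨h2, _⟩) <;> exact hne (h1.symm.trans h2)
  have hfnn : ∀ j : Fin N, 0 ≤ Int.fract ((S.card : ℝ) * |a j|) := fun j => Int.fract_nonneg _
  have hflt : ∀ j : Fin N, Int.fract ((S.card : ℝ) * |a j|) < 1 := fun j => Int.fract_lt_one _
  have hμA : ∀ j ∈ S, (μ (A j)).toReal = (1 - Int.fract ((S.card : ℝ) * |a j|)) / S.card := by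
    intro j hj
    rw [hlaw1 j hj, ENNReal.toReal_ofReal (div_nonneg (by linarith [hflt j]) hK0.le)]
  have hμB : ∀ j ∈ S, (μ (B j)).toReal = Int.fract ((S.card : ℝ) * |a j|) / S.card := by
    intro j hj
    rw [hlaw2 j hj, ENNReal.toReal_ofReal (div_nonneg (hfnn j) hK0.le)]
  have hμAB : ∀ j ∈ S, μ (A j ∪ B j) = ENNReal.ofReal (1 / S.card) := by
    intro j hj
    rw [measure_union (hdAB j) (hBmeas j), hlaw1 j hj, hlaw2 j hj,
      ← ENNReal.ofReal_add (div_nonneg (by linarith [hflt j]) hK0.le)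
        (div_nonneg (hfnn j) hK0.le), ← add_div]
    congr 1
    ring
  have hTmeas : MeasurableSet (⋃ j ∈ S, A j ∪ B j) :=
    S.measurableSet_biUnion (fun j _ => (hAmeas j).union (hBmeas j))
  have hT1 : μ (⋃ j ∈ S, A j ∪ B j) = 1 := by
    rw [measure_biUnion_finset hpair (fun j _ => (hAmeas j).union (hBmeas j)),
      Finset.sum_congr rfl hμAB, Finset.sum_const, nsmul_eq_mul,
      ← ENNReal.ofReal_natCast, ← ENNReal.ofReal_mul (Nat.cast_nonneg _),
      mul_one_div, div_self hKne, ENNReal.ofReal_one]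
  have hcompl : μ (⋃ j ∈ S, A j ∪ B j)ᶜ = 0 := by
    rw [measure_compl hTmeas (measure_ne_top μ _), measure_univ, hT1, tsub_self]
  have hane : ∀ j ∈ S, a j ≠ 0 := by
    intro j hj
    rw [hS] at hj
    exact (Finset.mem_filter.1 hj).2
  have hmf : ∀ j : Fin N, ((⌊(S.card : ℝ) * |a j|⌋ : ℝ)) =
      (S.card : ℝ) * |a j| - Int.fract ((S.card : ℝ) * |a j|) :=
    fun j => (Int.self_sub_fract _).symm
  -- the value of X on the pieces
  have hXA : ∀ j ∈ S, ∀ ω ∈ A j, X ω =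
      fun i => if i = j then ((⌊(S.card : ℝ) * |a j|⌋ : ℝ)) * Real.sign (a j) else 0 := by
    rintro j hj ω ⟨h1, h2⟩
    have hn : (n ω : ℝ) = ((⌊(S.card : ℝ) * |a j|⌋ : ℝ)) := by exact_mod_cast h2
    rw [hX, h1, hn]
  have hXB : ∀ j ∈ S, ∀ ω ∈ B j, X ω =
      fun i => if i = j then ((⌊(S.card : ℝ) * |a j|⌋ : ℝ) + 1) * Real.sign (a j) else 0 := by
    rintro j hj ω ⟨h1, h2⟩
    have hn : (n ω : ℝ) = ((⌊(S.card : ℝ) * |a j|⌋ : ℝ) + 1) := by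
      have : ((n ω : ℤ) : ℝ) = ((⌊(S.card : ℝ) * |a j|⌋ + 1 : ℤ) : ℝ) := by exact_mod_cast h2
      push_cast at this
      exact_mod_cast this
    rw [hX, h1, hn]
  constructor
  · -- expectation
    rw [fciqmc_split_integral μ S A B hAmeas hBmeas hdAB hpair hcompl X
      (fun j => fun i => if i = j then ((⌊(S.card : ℝ) * |a j|⌋ : ℝ)) * Real.sign (a j) else 0)
      (fun j => fun i => if i = j then ((⌊(S.card : ℝ) * |a j|⌋ : ℝ) + 1) * Real.sign (a j) else 0)
      hXA hXB]
    funext i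
    rw [Finset.sum_apply]
    simp only [Pi.add_apply, Pi.smul_apply, smul_eq_mul]
    by_cases hi : i ∈ S
    · rw [Finset.sum_eq_single_of_mem i hi
        (fun j _ hne => by simp [if_neg (Ne.symm hne)])]
      rw [hμA i hi, hμB i hi, if_pos rfl, if_pos rfl, hmf i]
      have hsa : Real.sign (a i) * |a i| = a i := by
        rcases (hane i hi).lt_or_gt with h | h
        · rw [Real.sign_of_neg h, abs_of_neg h]; ring
        · rw [Real.sign_of_pos h, abs_of_pos h]; ring
      field_simp
      linear_combination (S.card : ℝ) * hsa
    · have hai : a i = 0 := by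
        by_contra h
        rw [hS] at hi
        exact hi (Finset.mem_filter.2 ⟨Finset.mem_univ _, h⟩)
      rw [hai, Finset.sum_eq_zero]
      intro j hj
      have hne : i ≠ j := fun h => hi (h ▸ hj)
      simp [if_neg hne]
  · -- variance bound
    have hval : ∀ (j : Fin N) (v : ℝ),
        ∑ i, ((if i = j then v else 0) - a i) ^ 2 =
          (v - a j) ^ 2 + ((∑ i, a i ^ 2) - a j ^ 2) := by
      intro j v
      rw [← Finset.add_sum_erase _ _ (Finset.mem_univ j)]
      congr 1
      · simp
      · have hc : ∀ i ∈ Finset.univ.erase j,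
            ((if i = j then v else 0) - a i) ^ 2 = a i ^ 2 := fun i hi => by
          rw [if_neg (Finset.mem_erase.1 hi).1]; ring
        rw [Finset.sum_congr rfl hc, Finset.sum_erase_eq_sub (Finset.mem_univ j)]
    rw [fciqmc_split_integral μ S A B hAmeas hBmeas hdAB hpair hcompl
      (fun ω => ∑ i, (X ω i - a i) ^ 2)
      (fun j => ((⌊(S.card : ℝ) * |a j|⌋ : ℝ) * Real.sign (a j) - a j) ^ 2 +
        ((∑ i, a i ^ 2) - a j ^ 2))
      (fun j => (((⌊(S.card : ℝ) * |a j|⌋ : ℝ) + 1) * Real.sign (a j) - a j) ^ 2 +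
        ((∑ i, a i ^ 2) - a j ^ 2))
      (fun j hj ω hω => by
        show (∑ i, (X ω i - a i) ^ 2) = _
        rw [hXA j hj ω hω]; exact hval j _)
      (fun j hj ω hω => by
        show (∑ i, (X ω i - a i) ^ 2) = _
        rw [hXB j hj ω hω]; exact hval j _)]
    have hQS : ∑ j ∈ S, a j ^ 2 = ∑ i, a i ^ 2 := by
      rw [hS]
      exact Finset.sum_filter_of_ne (fun i _ h h0 => h (by simp [h0]))
    have termwise : ∀ j ∈ S,
        (μ (A j)).toReal • (((⌊(S.card : ℝ) * |a j|⌋ : ℝ) * Real.sign (a j) - a j) ^ 2 +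
            ((∑ i, a i ^ 2) - a j ^ 2)) +
          (μ (B j)).toReal • ((((⌊(S.card : ℝ) * |a j|⌋ : ℝ) + 1) * Real.sign (a j) - a j) ^ 2 +
            ((∑ i, a i ^ 2) - a j ^ 2)) ≤
        ((S.card : ℝ) * ((S.card : ℝ) - 2) * a j ^ 2 + ((∑ i, a i ^ 2) + 1 / 4)) / S.card := by
      intro j hj
      simp only [smul_eq_mul]
      rw [hμA j hj, hμB j hj, hmf j]
      set F := Int.fract ((S.card : ℝ) * |a j|) with hF
      have hF0 : 0 ≤ F := hfnn j
      have hF1 : F < 1 := hflt j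
      rw [div_mul_eq_mul_div, div_mul_eq_mul_div, ← add_div,
        div_le_div_iff_of_pos_right hK0]
      rcases (hane j hj).lt_or_gt with h | h
      · rw [Real.sign_of_neg h, abs_of_neg h]
        nlinarith [sq_nonneg (F - 1/2), sq_nonneg (a j), hK0]
      · rw [Real.sign_of_pos h, abs_of_pos h]
        nlinarith [sq_nonneg (F - 1/2), sq_nonneg (a j), hK0]
    refine le_trans (Finset.sum_le_sum termwise) ?_
    rw [← Finset.sum_div, Finset.sum_add_distrib, ← Finset.mul_sum, hQS,
      Finset.sum_const, nsmul_eq_mul]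
    exact le_of_eq (by field_simp; ring)
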